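/- Let λ₂, λ_n ∈ ℝ with λ_n < 0, 0 < λ₂, and let γ* = (2/(−λ_n))(√(1 − λ_n) − 1) ∈ (0,1). Then −γ*λ_n/2 ≥ (γ*λ₂ + √(γ*²λ₂² − 4(γ*−1)λ₂))/2 if and only if λ₂ ≤ |λ_n|/3. -/

import Mathlib

theorem stmt_18 (lam2 lamn : ℝ) (hlamn : lamn < 0) (hlam2 : 0 < lam2)
    (γs : ℝ) (hγ : γs = (2 / (-lamn)) * (Real.sqrt (1 - lamn) - 1))
    (hγ0 : 0 < γs) (hγ1 : γs < 1) :
    -γs * lamn / 2 ≥ (γs * lam2 + Real.sqrt (γs ^ 2 * lam2 ^ 2 - 4 * (γs - 1) * lam2)) / 2 ↔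
      lam2 ≤ |lamn| / 3 := by
  have hρ : 0 < -lamn := by linarith
  have hs2 : Real.sqrt (1 - lamn) ^ 2 = 1 - lamn := Real.sq_sqrt (by linarith)
  have key : γs ^ 2 * (-lamn) = 4 * (1 - γs) := by
    have hg : γs * (-lamn) = 2 * (Real.sqrt (1 - lamn) - 1) := by
      rw [hγ]; field_simp
      rw [mul_comm, mul_div_cancel_right₀ _ (ne_of_lt hlamn)]
    have hne : (-lamn) ≠ 0 := ne_of_gt hρ
    have hg2 : (γs * (-lamn)) ^ 2 = (2 * (Real.sqrt (1 - lamn) - 1)) ^ 2 := by rw [hg]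
    have : γs ^ 2 * (-lamn) * (-lamn) = 4 * (1 - γs) * (-lamn) := by
      linear_combination hg2 + 4 * hg + 4 * hs2
    exact mul_right_cancel₀ hne this
  have hE : 0 ≤ lam2 ^ 2 + (-lamn) * lam2 := by positivity
  have hD : γs ^ 2 * lam2 ^ 2 - 4 * (γs - 1) * lam2
      = γs ^ 2 * (lam2 ^ 2 + (-lamn) * lam2) := by nlinarith [key]
  have hsqrt : Real.sqrt (γs ^ 2 * lam2 ^ 2 - 4 * (γs - 1) * lam2)
      = γs * Real.sqrt (lam2 ^ 2 + (-lamn) * lam2) := by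
    rw [hD, Real.sqrt_mul (sq_nonneg γs), Real.sqrt_sq hγ0.le]
  rw [hsqrt, abs_of_neg hlamn]
  constructor
  · intro h
    have h1 : γs * Real.sqrt (lam2 ^ 2 + (-lamn) * lam2) ≤ γs * (-lamn) - γs * lam2 := by
      nlinarith [h]
    have h2 : Real.sqrt (lam2 ^ 2 + (-lamn) * lam2) ≤ -lamn - lam2 := by
      have := (mul_le_mul_iff_right₀ hγ0).mp (by linarith [h1] :
        γs * Real.sqrt (lam2 ^ 2 + (-lamn) * lam2) ≤ γs * (-lamn - lam2))
      linarith
    have h3 : lam2 ^ 2 + (-lamn) * lam2 ≤ (-lamn - lam2) ^ 2 := by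
      nlinarith [Real.sq_sqrt hE, Real.sqrt_nonneg (lam2 ^ 2 + (-lamn) * lam2), h2]
    nlinarith [h3]
  · intro h
    have h2 : Real.sqrt (lam2 ^ 2 + (-lamn) * lam2) ≤ -lamn - lam2 := by
      have hle : lam2 ^ 2 + (-lamn) * lam2 ≤ (-lamn - lam2) ^ 2 := by nlinarith
      calc Real.sqrt (lam2 ^ 2 + (-lamn) * lam2) ≤ Real.sqrt ((-lamn - lam2) ^ 2) :=
            Real.sqrt_le_sqrt hle
        _ = -lamn - lam2 := Real.sqrt_sq (by linarith)
    nlinarith [h2, mul_le_mul_of_nonneg_left h2 hγ0.le]
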